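/- For every semilinear set C ⊆ ℕ^d there is a Presburger formula φ(x₀,...,x_{d−1}) defining it, and conversely every set of the form {v ∈ ℕ^d | (ℕ,+,<,0,1) ⊨ φ(v)} for a first-order formula φ in the language of Presburger arithmetic is semilinear. -/

import Mathlib

open scoped BigOperators

/-- A set `C ⊆ ℕ^d` is linear if `C = {v₀ + Σᵢ cᵢ vᵢ | cᵢ ∈ ℕ}` for some vectors. -/
def IsLinear {d : ℕ} (C : Set (Fin d → ℕ)) : Prop :=
  ∃ (k : ℕ) (v₀ : Fin d → ℕ) (v : Fin k → Fin d → ℕ),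
    C = {x | ∃ c : Fin k → ℕ, x = v₀ + ∑ i, c i • v i}

/-- A set is semilinear if it is a finite union of linear sets. -/
def IsSemilinear {d : ℕ} (C : Set (Fin d → ℕ)) : Prop :=
  ∃ (m : ℕ) (Cs : Fin m → Set (Fin d → ℕ)),
    (∀ i, IsLinear (Cs i)) ∧ C = ⋃ i, Cs i

lemma isSemilinear_iff_finset {d : ℕ} (C : Set (Fin d → ℕ)) :
    IsSemilinear C ↔ ∃ T : Finset (Set (Fin d → ℕ)),
      (∀ A ∈ T, IsLinear A) ∧ C = ⋃ A ∈ T, A := by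
  classical
  constructor
  · rintro ⟨m, Cs, hlin, rfl⟩
    refine ⟨Finset.univ.image Cs, ?_, ?_⟩
    · intro A hA
      rcases Finset.mem_image.1 hA with ⟨i, _, rfl⟩
      exact hlin i
    · ext x
      simp only [Set.mem_iUnion, Finset.mem_image, Finset.mem_univ, true_and]
      constructor
      · rintro ⟨i, hx⟩; exact ⟨Cs i, ⟨i, rfl⟩, hx⟩
      · rintro ⟨A, ⟨i, rfl⟩, hx⟩; exact ⟨i, hx⟩
  · rintro ⟨T, hlin, rfl⟩
    refine ⟨T.card, fun i => ((T.equivFin).symm i : Set (Fin d → ℕ)), ?_, ?_⟩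
    · intro i; exact hlin _ (((T.equivFin).symm i).2)
    · ext x
      simp only [Set.mem_iUnion]
      constructor
      · rintro ⟨A, hA, hx⟩; exact ⟨T.equivFin ⟨A, hA⟩, by simpa using hx⟩
      · rintro ⟨i, hx⟩; exact ⟨_, ((T.equivFin).symm i).2, hx⟩

lemma IsLinear.isSemilinear {d : ℕ} {C : Set (Fin d → ℕ)} (h : IsLinear C) :
    IsSemilinear C :=
  ⟨1, fun _ => C, fun _ => h, by ext x; simp⟩

lemma isSemilinear_empty {d : ℕ} : IsSemilinear (∅ : Set (Fin d → ℕ)) :=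
  ⟨0, fun i => i.elim0, fun i => i.elim0, by simp⟩

lemma IsSemilinear.union {d : ℕ} {C D : Set (Fin d → ℕ)}
    (hC : IsSemilinear C) (hD : IsSemilinear D) : IsSemilinear (C ∪ D) := by
  classical
  rw [isSemilinear_iff_finset] at *
  rcases hC with ⟨T₁, h₁, rfl⟩
  rcases hD with ⟨T₂, h₂, rfl⟩
  refine ⟨T₁ ∪ T₂, ?_, ?_⟩
  · intro A hA
    rcases Finset.mem_union.1 hA with h | h
    · exact h₁ A h
    · exact h₂ A h
  · ext x; simp only [Set.mem_union, Set.mem_iUnion, Finset.mem_union]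
    constructor
    · rintro (⟨A, hA, hx⟩ | ⟨A, hA, hx⟩)
      exacts [⟨A, Or.inl hA, hx⟩, ⟨A, Or.inr hA, hx⟩]
    · rintro ⟨A, hA | hA, hx⟩
      exacts [Or.inl ⟨A, hA, hx⟩, Or.inr ⟨A, hA, hx⟩]

lemma IsSemilinear.biUnion {d : ℕ} {ι : Type*} (s : Finset ι)
    (F : ι → Set (Fin d → ℕ)) (h : ∀ i ∈ s, IsSemilinear (F i)) :
    IsSemilinear (⋃ i ∈ s, F i) := by
  classical
  induction s using Finset.induction_on with
  | empty => simpa using isSemilinear_empty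
  | insert a s hx ih =>
    rw [Finset.set_biUnion_insert]
    exact (h a (Finset.mem_insert_self a s)).union
      (ih fun i hi => h i (Finset.mem_insert_of_mem hi))

structure PAtom (n : ℕ) where
  ineq : Bool
  m : ℤ
  a : Fin n → ℤ
  b : ℤ

namespace PAtom

variable {n : ℕ}

def val (A : PAtom n) (v : Fin n → ℕ) : ℤ := (∑ i, A.a i * (v i : ℤ)) + A.b

def Holds (A : PAtom n) (v : Fin n → ℕ) : Prop :=
  if A.ineq then 0 ≤ A.val v else A.m ∣ A.val v

def homog (A : PAtom n) : PAtom n := { A with b := 0 }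

@[simp] lemma homog_ineq (A : PAtom n) : A.homog.ineq = A.ineq := rfl
@[simp] lemma homog_m (A : PAtom n) : A.homog.m = A.m := rfl
@[simp] lemma homog_homog (A : PAtom n) : A.homog.homog = A.homog := rfl

lemma val_eq_homog (A : PAtom n) (v : Fin n → ℕ) : A.val v = A.homog.val v + A.b := by
  simp [val, homog]

lemma val_add (A : PAtom n) (v w : Fin n → ℕ) :
    A.val (v + w) = A.val v + A.homog.val w := by
  simp only [val, homog, Pi.add_apply]
  push_cast
  have : ∀ i ∈ Finset.univ, A.a i * ((v i : ℤ) + w i) = A.a i * v i + A.a i * w i :=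
    fun i _ => by ring
  rw [Finset.sum_congr rfl this, Finset.sum_add_distrib]
  ring

lemma homog_val_tsub (A : PAtom n) {v w : Fin n → ℕ} (h : v ≤ w) :
    A.homog.val (w - v) = A.homog.val w - A.homog.val v := by
  simp only [val, homog, Pi.sub_apply, add_zero]
  rw [← Finset.sum_sub_distrib]
  refine Finset.sum_congr rfl fun i _ => ?_
  rw [Nat.cast_sub (h i)]
  ring

lemma homog_val_zero (A : PAtom n) : A.homog.val 0 = 0 := by simp [val, homog]

end PAtom

variable {n : ℕ}

def CellHolds (L : List (PAtom n)) (v : Fin n → ℕ) : Prop := ∀ A ∈ L, A.Holds v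

def RL (L : List (PAtom n)) (v w : Fin n → ℕ) : Prop :=
  v ≤ w ∧ ∀ A ∈ L, A.ineq = true → A.val v ≤ A.val w

lemma RL.refl (L : List (PAtom n)) (v : Fin n → ℕ) : RL L v v :=
  ⟨le_refl _, fun _ _ _ => le_refl _⟩

lemma RL.trans {L : List (PAtom n)} {u v w : Fin n → ℕ}
    (h₁ : RL L u v) (h₂ : RL L v w) : RL L u w :=
  ⟨le_trans h₁.1 h₂.1, fun A hA hi => le_trans (h₁.2 A hA hi) (h₂.2 A hA hi)⟩

lemma RL_map_homog {L : List (PAtom n)} {v w : Fin n → ℕ} :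
    RL (L.map PAtom.homog) v w ↔ RL L v w := by
  constructor <;> rintro ⟨h₁, h₂⟩ <;> refine ⟨h₁, ?_⟩
  · intro A hA hi
    have := h₂ A.homog (List.mem_map_of_mem hA) (by simpa using hi)
    rw [A.val_eq_homog v, A.val_eq_homog w]
    omega
  · rintro B hB hi
    rcases List.mem_map.1 hB with ⟨A, hA, rfl⟩
    have := h₂ A hA (by simpa using hi)
    rw [A.val_eq_homog v, A.val_eq_homog w] at this
    omega

/-- Difference of comparable solutions solves the homogeneous system. -/
lemma cellHolds_homog_tsub {L : List (PAtom n)} {v w : Fin n → ℕ}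
    (hv : CellHolds L v) (hw : CellHolds L w) (h : RL L v w) :
    CellHolds (L.map PAtom.homog) (w - v) := by
  rintro B hB
  rcases List.mem_map.1 hB with ⟨A, hA, rfl⟩
  have hval : A.homog.val (w - v) = A.val w - A.val v := by
    rw [A.homog_val_tsub h.1, A.val_eq_homog v, A.val_eq_homog w]; ring
  have hv' := hv A hA
  have hw' := hw A hA
  unfold PAtom.Holds at hv' hw' ⊢
  rcases hi : A.ineq with _ | _
  · simp only [hi, PAtom.homog_ineq, if_false, PAtom.homog_m] at hv' hw' ⊢
    rw [hval]; exact dvd_sub hw' hv'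
  · simp only [hi, PAtom.homog_ineq, if_true] at hv' hw' ⊢
    rw [hval]
    have := h.2 A hA hi
    omega

lemma cellHolds_add {L : List (PAtom n)} {v h : Fin n → ℕ}
    (hv : CellHolds L v) (hh : CellHolds (L.map PAtom.homog) h) :
    CellHolds L (v + h) := by
  intro A hA
  have hh' := hh A.homog (List.mem_map_of_mem hA)
  have hv' := hv A hA
  unfold PAtom.Holds at hv' hh' ⊢
  rw [A.val_add]
  rcases hi : A.ineq with _ | _
  · simp only [hi, PAtom.homog_ineq, if_false, PAtom.homog_m] at hv' hh' ⊢
    exact dvd_add hv' hh'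
  · simp only [hi, PAtom.homog_ineq, if_true] at hv' hh' ⊢
    omega

lemma cellHolds_homog_zero (L : List (PAtom n)) :
    CellHolds (L.map PAtom.homog) 0 := by
  rintro B hB
  rcases List.mem_map.1 hB with ⟨A, hA, rfl⟩
  unfold PAtom.Holds
  rw [A.homog_val_zero]
  rcases hi : A.ineq with _ | _ <;> simp [hi]

lemma cellHolds_homog_add {L : List (PAtom n)} {v w : Fin n → ℕ}
    (hv : CellHolds (L.map PAtom.homog) v) (hw : CellHolds (L.map PAtom.homog) w) :
    CellHolds (L.map PAtom.homog) (v + w) := by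
  refine cellHolds_add (L := L.map PAtom.homog) (h := w) hv ?_
  rwa [List.map_map, show PAtom.homog ∘ PAtom.homog = PAtom.homog from funext fun A => A.homog_homog]

lemma cellHolds_homog_sum {L : List (PAtom n)} {ι : Type*} (s : Finset ι)
    (f : ι → Fin n → ℕ) (hf : ∀ i ∈ s, CellHolds (L.map PAtom.homog) (f i)) :
    CellHolds (L.map PAtom.homog) (∑ i ∈ s, f i) := by
  classical
  induction s using Finset.induction_on with
  | empty => simpa using cellHolds_homog_zero L
  | insert a s hx ih =>
    rw [Finset.sum_insert hx]
    exact cellHolds_homog_add (hf a (Finset.mem_insert_self a s))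
      (ih fun i hi => hf i (Finset.mem_insert_of_mem hi))

lemma cellHolds_homog_smul {L : List (PAtom n)} {v : Fin n → ℕ} (c : ℕ)
    (hv : CellHolds (L.map PAtom.homog) v) :
    CellHolds (L.map PAtom.homog) (c • v) := by
  induction c with
  | zero => simpa using cellHolds_homog_zero L
  | succ c ih =>
    have : (c + 1) • v = c • v + v := by rw [add_smul, one_smul]
    rw [this]
    exact cellHolds_homog_add ih hv

/-- Dickson's lemma applied to solutions: any sequence of "nonnegative" points
contains a related pair. -/
lemma exists_RL (L : List (PAtom n)) (f : ℕ → Fin n → ℕ)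
    (hf : ∀ i, ∀ A ∈ L, A.ineq = true → 0 ≤ A.val (f i)) :
    ∃ i j, i < j ∧ RL L (f i) (f j) := by
  classical
  set g : ℕ → (Fin n ⊕ Fin L.length) → ℕ :=
    fun i => Sum.elim (f i) (fun k => ((L.get k).val (f i)).toNat) with hg
  have hpwo : @WellQuasiOrdered ((Fin n ⊕ Fin L.length) → ℕ) (· ≤ ·) := wellQuasiOrdered_le
  obtain ⟨i, j, hij, hle⟩ := hpwo g
  refine ⟨i, j, hij, ?_, ?_⟩
  · intro x; exact hle (Sum.inl x)
  · intro A hA hi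
    rcases List.mem_iff_get.1 hA with ⟨k, rfl⟩
    have h1 := hle (Sum.inr k)
    simp only [hg, Sum.elim_inr] at h1
    have h2 := hf i _ hA hi
    have h3 := hf j _ hA hi
    omega

/-- The set of minimal elements of `S` w.r.t. `RL L` is finite, provided
members of `S` make all inequality atoms nonnegative. -/
lemma minimals_finite (L : List (PAtom n)) (S : Set (Fin n → ℕ))
    (hS : ∀ v ∈ S, ∀ A ∈ L, A.ineq = true → 0 ≤ A.val v) :
    {v ∈ S | ∀ u ∈ S, RL L u v → u = v}.Finite := by
  by_contra hinf
  have hinf' : Set.Infinite {v ∈ S | ∀ u ∈ S, RL L u v → u = v} := hinf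
  set e := hinf'.natEmbedding
  obtain ⟨i, j, hij, hR⟩ := exists_RL L (fun i => (e i : Fin n → ℕ))
    (fun i => hS _ (e i).2.1)
  have := (e j).2.2 _ (e i).2.1 hR
  have : e i = e j := Subtype.ext this
  exact absurd (e.injective this) (Nat.ne_of_lt hij)

lemma exists_minimal (L : List (PAtom n)) (S : Set (Fin n → ℕ)) :
    ∀ w ∈ S, ∃ p, (p ∈ S ∧ ∀ u ∈ S, RL L u p → u = p) ∧ RL L p w := by
  have key : ∀ N : ℕ, ∀ w ∈ S, (∑ i, w i) = N →
      ∃ p, (p ∈ S ∧ ∀ u ∈ S, RL L u p → u = p) ∧ RL L p w := by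
    intro N
    induction N using Nat.strong_induction_on with
    | _ N ih =>
    intro w hw hN
    by_cases hmin : ∀ u ∈ S, RL L u w → u = w
    · exact ⟨w, ⟨hw, hmin⟩, RL.refl L w⟩
    · push_neg at hmin
      obtain ⟨u, hu, hRu, hne⟩ := hmin
      have hlt : ∑ i, u i < ∑ i, w i := by
        have hle : ∀ i, u i ≤ w i := hRu.1
        have : ∃ i, u i < w i := by
          by_contra hc
          push_neg at hc
          exact hne (funext fun i => le_antisymm (hle i) (hc i))
        obtain ⟨i₀, hi₀⟩ := this
        exact Finset.sum_lt_sum (fun i _ => hle i) ⟨i₀, Finset.mem_univ _, hi₀⟩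
      rw [hN] at hlt
      obtain ⟨p, hp, hRp⟩ := ih _ hlt u hu rfl
      exact ⟨p, hp, hRp.trans hRu⟩
  intro w hw
  exact key _ w hw rfl
lemma map_homog_idem (L : List (PAtom n)) :
    (L.map PAtom.homog).map PAtom.homog = L.map PAtom.homog := by
  rw [List.map_map, show PAtom.homog ∘ PAtom.homog = PAtom.homog from
    funext fun A => A.homog_homog]

lemma span_homog (L : List (PAtom n)) :
    ∃ G : Finset (Fin n → ℕ),
      (∀ g ∈ G, CellHolds (L.map PAtom.homog) g) ∧
      ∀ h, CellHolds (L.map PAtom.homog) h →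
        ∃ c : (Fin n → ℕ) → ℕ, h = ∑ g ∈ G, c g • g := by
  classical
  set L' := L.map PAtom.homog with hL'
  set S : Set (Fin n → ℕ) := {v | CellHolds L' v ∧ v ≠ 0} with hS'
  have hS : ∀ v ∈ S, ∀ A ∈ L', A.ineq = true → 0 ≤ A.val v := by
    intro v hv A hA hi
    have := hv.1 A hA
    unfold PAtom.Holds at this
    simpa [hi] using this
  have hfin := minimals_finite L' S hS
  refine ⟨hfin.toFinset, ?_, ?_⟩
  · intro g hg
    exact ((Set.Finite.mem_toFinset _).1 hg).1.1
  · have key : ∀ N h, CellHolds L' h → (∑ i, h i) = N →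
        ∃ c : (Fin n → ℕ) → ℕ, h = ∑ g ∈ hfin.toFinset, c g • g := by
      intro N
      induction N using Nat.strong_induction_on with
      | _ N ih =>
      intro h hh hN
      by_cases h0 : h = 0
      · exact ⟨fun _ => 0, by simp [h0]⟩
      · obtain ⟨p, hpmin, hRp⟩ := exists_minimal L' S h ⟨hh, h0⟩
        have hpG : p ∈ hfin.toFinset := (Set.Finite.mem_toFinset _).2 hpmin
        have hple : p ≤ h := hRp.1
        have hp0 : p ≠ 0 := hpmin.1.2
        have hdiff : CellHolds L' (h - p) := by
          have := cellHolds_homog_tsub (L := L') hpmin.1.1 hh (by rw [hL', RL_map_homog] at hRp ⊢; exact hRp)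
          rwa [hL', map_homog_idem] at this
        have hlt : ∑ i, (h - p) i < N := by
          rw [← hN]
          obtain ⟨i₀, hi₀⟩ : ∃ i, p i ≠ 0 := Function.ne_iff.1 hp0
          refine Finset.sum_lt_sum (fun i _ => Nat.sub_le _ _)
            ⟨i₀, Finset.mem_univ _, ?_⟩
          have h1 : 1 ≤ p i₀ := Nat.one_le_iff_ne_zero.2 hi₀
          have h2 : 1 ≤ h i₀ := le_trans h1 (hple i₀)
          exact Nat.sub_lt (by omega) (by omega)
        obtain ⟨c', hc'⟩ := ih _ hlt (h - p) hdiff rfl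
        refine ⟨fun g => c' g + (if g = p then 1 else 0), ?_⟩
        have hsum : ∑ g ∈ hfin.toFinset, (c' g + (if g = p then 1 else 0)) • g
            = (∑ g ∈ hfin.toFinset, c' g • g) + p := by
          have hdist : ∀ g ∈ hfin.toFinset, (c' g + (if g = p then 1 else 0)) • g
              = c' g • g + (if g = p then 1 else 0) • g := fun g _ => add_smul _ _ _
          rw [Finset.sum_congr rfl hdist, Finset.sum_add_distrib]
          congr 1
          simp [ite_smul, Finset.sum_ite_eq' _ p, hpG]
        rw [hsum, ← hc', tsub_add_cancel_of_le hple]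
    intro h hh
    exact key _ h hh rfl

theorem cellHolds_semilinear (L : List (PAtom n)) :
    IsSemilinear {v | CellHolds L v} := by
  classical
  set P : Set (Fin n → ℕ) := {v | CellHolds L v} with hP
  have hSnn : ∀ v ∈ P, ∀ A ∈ L, A.ineq = true → 0 ≤ A.val v := by
    intro v hv A hA hi
    have := hv A hA
    unfold PAtom.Holds at this
    simpa [hi] using this
  have hfin := minimals_finite L P hSnn
  obtain ⟨G, hG, hspan⟩ := span_homog L
  set e := G.equivFin with he
  set gs : Fin G.card → (Fin n → ℕ) := fun i => (e.symm i : Fin n → ℕ) with hgs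
  have hPeq : P = ⋃ p ∈ hfin.toFinset,
      {x | ∃ c : Fin G.card → ℕ, x = p + ∑ i, c i • gs i} := by
    ext w
    simp only [Set.mem_iUnion, Set.mem_setOf_eq]
    constructor
    · intro hw
      obtain ⟨p, hpmin, hRp⟩ := exists_minimal L P w hw
      have hdiff := cellHolds_homog_tsub (L := L) hpmin.1 hw hRp
      obtain ⟨c, hc⟩ := hspan _ hdiff
      refine ⟨p, (Set.Finite.mem_toFinset _).2 hpmin, fun i => c (gs i), ?_⟩
      have hre : ∑ i, c (gs i) • gs i = ∑ g ∈ G, c g • g := by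
        rw [hgs, ← Finset.sum_coe_sort G (fun g => c g • (g : Fin n → ℕ))]
        exact Equiv.sum_comp e.symm (fun g : ↥G => c (g : Fin n → ℕ) • (g : Fin n → ℕ))
      rw [hre, ← hc]
      exact (add_tsub_cancel_of_le hRp.1).symm
    · rintro ⟨p, hpM, c, rfl⟩
      have hp : CellHolds L p := ((Set.Finite.mem_toFinset _).1 hpM).1
      have hsumH : CellHolds (L.map PAtom.homog) (∑ i, c i • gs i) := by
        refine cellHolds_homog_sum _ _ fun i _ => ?_
        exact cellHolds_homog_smul _ (hG _ (e.symm i).2)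
      exact cellHolds_add hp hsumH
  rw [hPeq]
  exact IsSemilinear.biUnion _ _ fun p _ =>
    IsLinear.isSemilinear ⟨G.card, p, gs, rfl⟩

/-- Terms of Presburger arithmetic over the structure `(ℕ, +, <, 0, 1)`, with free
variables among `Fin n`. -/
inductive PTerm : ℕ → Type where
  | var : {n : ℕ} → Fin n → PTerm n
  | zero : {n : ℕ} → PTerm n
  | one : {n : ℕ} → PTerm n
  | add : {n : ℕ} → PTerm n → PTerm n → PTerm n

/-- Evaluation of a Presburger term under a valuation. -/
def PTerm.eval : {n : ℕ} → PTerm n → (Fin n → ℕ) → ℕ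
  | _, PTerm.var i, v => v i
  | _, PTerm.zero, _ => 0
  | _, PTerm.one, _ => 1
  | _, PTerm.add s t, v => s.eval v + t.eval v

/-- First-order formulas of Presburger arithmetic (atomic `=` and `<`, negation,
disjunction, existential quantification). -/
inductive PForm : ℕ → Type where
  | eq : {n : ℕ} → PTerm n → PTerm n → PForm n
  | lt : {n : ℕ} → PTerm n → PTerm n → PForm n
  | not : {n : ℕ} → PForm n → PForm n
  | or : {n : ℕ} → PForm n → PForm n → PForm n
  | ex : {n : ℕ} → PForm (n + 1) → PForm n

/-- Satisfaction of a Presburger formula in `(ℕ, +, <, 0, 1)`. -/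
def PForm.Sat : {n : ℕ} → PForm n → (Fin n → ℕ) → Prop
  | _, PForm.eq s t, v => s.eval v = t.eval v
  | _, PForm.lt s t, v => s.eval v < t.eval v
  | _, PForm.not φ, v => ¬ φ.Sat v
  | _, PForm.or φ ψ, v => φ.Sat v ∨ ψ.Sat v
  | _, PForm.ex φ, v => ∃ m : ℕ, φ.Sat (Fin.cons m v)

/-! ### DNF of atoms -/

def DSat (D : List (List (PAtom n))) (v : Fin n → ℕ) : Prop :=
  ∃ L ∈ D, CellHolds L v

def AtomWF (A : PAtom n) : Prop := A.ineq = false → A.m ≠ 0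
def CellWF (L : List (PAtom n)) : Prop := ∀ A ∈ L, AtomWF A
def DWF (D : List (List (PAtom n))) : Prop := ∀ L ∈ D, CellWF L

lemma dsat_nil (v : Fin n → ℕ) : ¬ DSat ([] : List (List (PAtom n))) v := by
  rintro ⟨L, hL, -⟩; exact absurd hL (List.not_mem_nil)

lemma dsat_append {D₁ D₂ : List (List (PAtom n))} {v : Fin n → ℕ} :
    DSat (D₁ ++ D₂) v ↔ DSat D₁ v ∨ DSat D₂ v := by
  constructor
  · rintro ⟨L, hL, h⟩
    rcases List.mem_append.1 hL with h' | h'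
    exacts [Or.inl ⟨L, h', h⟩, Or.inr ⟨L, h', h⟩]
  · rintro (⟨L, hL, h⟩ | ⟨L, hL, h⟩)
    exacts [⟨L, List.mem_append.2 (Or.inl hL), h⟩, ⟨L, List.mem_append.2 (Or.inr hL), h⟩]

lemma dwf_append {D₁ D₂ : List (List (PAtom n))} (h₁ : DWF D₁) (h₂ : DWF D₂) :
    DWF (D₁ ++ D₂) := by
  intro L hL
  rcases List.mem_append.1 hL with h | h
  exacts [h₁ L h, h₂ L h]

lemma cellHolds_cons {A : PAtom n} {L : List (PAtom n)} {v : Fin n → ℕ} :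
    CellHolds (A :: L) v ↔ A.Holds v ∧ CellHolds L v := List.forall_mem_cons

lemma cellHolds_append {L₁ L₂ : List (PAtom n)} {v : Fin n → ℕ} :
    CellHolds (L₁ ++ L₂) v ↔ CellHolds L₁ v ∧ CellHolds L₂ v := List.forall_mem_append

/-- Intersection of two DNFs. -/
lemma dnf_inter (D₁ D₂ : List (List (PAtom n))) (h₁ : DWF D₁) (h₂ : DWF D₂) :
    ∃ D, DWF D ∧ ∀ v, (DSat D v ↔ DSat D₁ v ∧ DSat D₂ v) := by
  refine ⟨D₁.flatMap (fun L₁ => D₂.map (fun L₂ => L₁ ++ L₂)), ?_, ?_⟩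
  · intro L hL
    rcases List.mem_flatMap.1 hL with ⟨L₁, hL₁, hL'⟩
    rcases List.mem_map.1 hL' with ⟨L₂, hL₂, rfl⟩
    intro A hA
    rcases List.mem_append.1 hA with h | h
    exacts [h₁ L₁ hL₁ A h, h₂ L₂ hL₂ A h]
  · intro v
    constructor
    · rintro ⟨L, hL, h⟩
      rcases List.mem_flatMap.1 hL with ⟨L₁, hL₁, hL'⟩
      rcases List.mem_map.1 hL' with ⟨L₂, hL₂, rfl⟩
      rcases cellHolds_append.1 h with ⟨ha, hb⟩
      exact ⟨⟨L₁, hL₁, ha⟩, ⟨L₂, hL₂, hb⟩⟩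
    · rintro ⟨⟨L₁, hL₁, ha⟩, ⟨L₂, hL₂, hb⟩⟩
      exact ⟨L₁ ++ L₂, List.mem_flatMap.2 ⟨L₁, hL₁, List.mem_map.2 ⟨L₂, hL₂, rfl⟩⟩,
        cellHolds_append.2 ⟨ha, hb⟩⟩

/-- Negation of a single well-formed atom is a DNF. -/
lemma atom_neg (A : PAtom n) (hWF : AtomWF A) :
    ∃ D, DWF D ∧ ∀ v, (¬ A.Holds v ↔ DSat D v) := by
  rcases hi : A.ineq with _ | _
  · -- divisibility atom, m ≠ 0
    have hm : A.m ≠ 0 := hWF hi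
    set M : ℕ := A.m.natAbs with hM
    have hMpos : 0 < M := Int.natAbs_pos.2 hm
    refine ⟨(List.range (M - 1)).map
      (fun r : ℕ => [⟨false, A.m, A.a, A.b - ((r : ℤ) + 1)⟩]), ?_, ?_⟩
    · intro L hL
      rcases List.mem_map.1 hL with ⟨r, _, rfl⟩
      intro B hB
      rcases List.mem_singleton.1 hB with rfl
      exact fun _ => hm
    · intro v
      have hval : ∀ r : ℕ, PAtom.val ⟨false, A.m, A.a, A.b - ((r : ℤ) + 1)⟩ v
          = A.val v - ((r : ℤ) + 1) := by
        intro r; simp only [PAtom.val]; ring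
      have hdvd_iff : ∀ z : ℤ, A.m ∣ z ↔ (M : ℤ) ∣ z := by
        intro z; rw [hM, Int.natAbs_dvd]
      set z := A.val v with hz
      constructor
      · intro hn
        unfold PAtom.Holds at hn
        simp only [hi, Bool.false_eq_true, if_false] at hn
        rw [hdvd_iff] at hn
        have hMne : (M : ℤ) ≠ 0 := by exact_mod_cast hMpos.ne'
        have hr0nn : 0 ≤ z % (M : ℤ) := Int.emod_nonneg z hMne
        have hr0lt : z % (M : ℤ) < (M : ℤ) := Int.emod_lt_of_pos z (by exact_mod_cast hMpos)
        have hr0ne : z % (M : ℤ) ≠ 0 := fun h => hn (Int.dvd_of_emod_eq_zero h)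
        have hdz : (M : ℤ) ∣ z - z % (M : ℤ) := Int.dvd_self_sub_of_emod_eq rfl
        have hrmem : (z % (M : ℤ)).toNat - 1 ∈ List.range (M - 1) :=
          List.mem_range.2 (by omega)
        refine ⟨_, List.mem_map.2 ⟨_, hrmem, rfl⟩, ?_⟩
        intro B hB
        rcases List.mem_singleton.1 hB with rfl
        unfold PAtom.Holds
        simp only [Bool.false_eq_true, if_false]
        rw [hval, hdvd_iff]
        have hco : z - ((((z % (M : ℤ)).toNat - 1 : ℕ) : ℤ) + 1) = z - z % (M : ℤ) := by
          omega
        rw [hco]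
        exact hdz
      · rintro ⟨L, hL, h⟩ hc
        rcases List.mem_map.1 hL with ⟨r, hr, rfl⟩
        have hB := h _ (List.mem_singleton_self _)
        unfold PAtom.Holds at hB hc
        simp only [hi, Bool.false_eq_true, if_false] at hB hc
        rw [hval r, hdvd_iff] at hB
        rw [hdvd_iff] at hc
        have hd : (M : ℤ) ∣ ((r : ℤ) + 1) := by
          have := dvd_sub hc hB
          simpa [hz] using this
        have hle := Int.le_of_dvd (by positivity) hd
        have hrlt := List.mem_range.1 hr
        omega
  · -- inequality atom
    refine ⟨[[⟨true, 0, fun i => -(A.a i), -A.b - 1⟩]], ?_, ?_⟩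
    · intro L hL
      rcases List.mem_singleton.1 hL with rfl
      intro B hB
      rcases List.mem_singleton.1 hB with rfl
      exact fun h => nomatch h
    · intro v
      have hval : PAtom.val ⟨true, 0, fun i => -(A.a i), -A.b - 1⟩ v = -(A.val v) - 1 := by
        simp only [PAtom.val, neg_mul, Finset.sum_neg_distrib]
        ring
      unfold PAtom.Holds DSat
      rw [hi]
      constructor
      · intro h
        refine ⟨_, List.mem_singleton_self _, ?_⟩
        intro B hB
        rcases List.mem_singleton.1 hB with rfl
        unfold PAtom.Holds
        simp only [if_true]
        rw [hval]; simp only [if_true] at h; omega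
      · rintro ⟨L, hL, h⟩ hc
        rcases List.mem_singleton.1 hL with rfl
        have := h _ (List.mem_singleton_self _)
        unfold PAtom.Holds at this
        simp only [if_true] at this hc
        rw [hval] at this; omega

lemma cell_neg (L : List (PAtom n)) (hWF : CellWF L) :
    ∃ D, DWF D ∧ ∀ v, (¬ CellHolds L v ↔ DSat D v) := by
  induction L with
  | nil =>
    refine ⟨[], fun L hL => absurd hL (List.not_mem_nil), fun v => ?_⟩
    constructor
    · intro h; exact absurd (fun A hA => absurd hA (List.not_mem_nil)) h
    · intro h; exact absurd h (dsat_nil v)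
  | cons A L ih =>
    obtain ⟨DA, hDAwf, hDA⟩ := atom_neg A (hWF A (List.mem_cons_self))
    obtain ⟨DL, hDLwf, hDL⟩ := ih (fun B hB => hWF B (List.mem_cons_of_mem A hB))
    refine ⟨DA ++ DL, dwf_append hDAwf hDLwf, fun v => ?_⟩
    rw [dsat_append, cellHolds_cons, ← hDA, ← hDL]
    tauto

lemma dnf_neg (D : List (List (PAtom n))) (hWF : DWF D) :
    ∃ D', DWF D' ∧ ∀ v, (¬ DSat D v ↔ DSat D' v) := by
  induction D with
  | nil =>
    refine ⟨[[]], ?_, fun v => ?_⟩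
    · intro L hL
      rcases List.mem_singleton.1 hL with rfl
      intro A hA; exact absurd hA (List.not_mem_nil)
    · constructor
      · intro _
        exact ⟨[], List.mem_singleton_self _, fun A hA => absurd hA (List.not_mem_nil)⟩
      · intro _; exact dsat_nil v
  | cons L D ih =>
    obtain ⟨DL, hDLwf, hDL⟩ := cell_neg L (hWF L (List.mem_cons_self))
    obtain ⟨DD, hDDwf, hDD⟩ := ih (fun L' hL' => hWF L' (List.mem_cons_of_mem L hL'))
    obtain ⟨D', hD'wf, hD'⟩ := dnf_inter DL DD hDLwf hDDwf
    refine ⟨D', hD'wf, fun v => ?_⟩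
    rw [hD', ← hDL, ← hDD]
    have : DSat (L :: D) v ↔ CellHolds L v ∨ DSat D v := by
      constructor
      · rintro ⟨L', hL', h⟩
        rcases List.mem_cons.1 hL' with rfl | hL'
        exacts [Or.inl h, Or.inr ⟨L', hL', h⟩]
      · rintro (h | ⟨L', hL', h⟩)
        exacts [⟨L, List.mem_cons_self, h⟩, ⟨L', List.mem_cons_of_mem L hL', h⟩]
    rw [this]
    tauto

lemma dsat_cons {L : List (PAtom n)} {D : List (List (PAtom n))} {v : Fin n → ℕ} :
    DSat (L :: D) v ↔ CellHolds L v ∨ DSat D v := by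
  constructor
  · rintro ⟨L', hL', h⟩
    rcases List.mem_cons.1 hL' with rfl | hL'
    exacts [Or.inl h, Or.inr ⟨L', hL', h⟩]
  · rintro (h | ⟨L', hL', h⟩)
    exacts [⟨L, List.mem_cons_self, h⟩, ⟨L', List.mem_cons_of_mem L hL', h⟩]

/-- Every Presburger term is a linear function with natural coefficients. -/
lemma pterm_linear (t : PTerm n) :
    ∃ (a : Fin n → ℕ) (b : ℕ), ∀ v, t.eval v = (∑ i, a i * v i) + b := by
  induction t with
  | var i =>
    refine ⟨fun j => if j = i then 1 else 0, 0, fun v => ?_⟩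
    simp [PTerm.eval, ite_mul, Finset.sum_ite_eq' Finset.univ i]
  | zero => exact ⟨0, 0, fun v => by simp [PTerm.eval]⟩
  | one => exact ⟨0, 1, fun v => by simp [PTerm.eval]⟩
  | add s t ihs iht =>
    obtain ⟨a₁, b₁, h₁⟩ := ihs
    obtain ⟨a₂, b₂, h₂⟩ := iht
    refine ⟨a₁ + a₂, b₁ + b₂, fun v => ?_⟩
    simp only [PTerm.eval, h₁ v, h₂ v, Pi.add_apply]
    rw [show ∀ w : Fin n → ℕ, (∑ i, (a₁ i + a₂ i) * w i) = ∑ i, (a₁ i * w i + a₂ i * w i)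
      from fun w => Finset.sum_congr rfl fun i _ => add_mul _ _ _, Finset.sum_add_distrib]
    ring

/-- The set defined by comparing two linear terms, as an atom value. -/
lemma atom_val_of_terms (a₁ a₂ : Fin n → ℕ) (b₁ b₂ : ℕ) (v : Fin n → ℕ) :
    PAtom.val ⟨true, 0, fun i => (a₁ i : ℤ) - (a₂ i : ℤ), (b₁ : ℤ) - (b₂ : ℤ)⟩ v
      = ((∑ i, a₁ i * v i) + b₁ : ℕ) - (((∑ i, a₂ i * v i) + b₂ : ℕ) : ℤ) := by
  simp only [PAtom.val]
  push_cast
  rw [show ∀ w : Fin n → ℕ, (∑ i, ((a₁ i : ℤ) - a₂ i) * w i)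
      = ∑ i, ((a₁ i : ℤ) * w i - (a₂ i : ℤ) * w i)
    from fun w => Finset.sum_congr rfl fun i _ => sub_mul _ _ _, Finset.sum_sub_distrib]
  ring

/-! ### Eliminating the quantified variable -/

def erest (A : PAtom (n+1)) (v : Fin n → ℕ) : ℤ := (∑ i, A.a i.succ * (v i : ℤ)) + A.b

lemma val_cons (A : PAtom (n+1)) (x : ℕ) (v : Fin n → ℕ) :
    A.val (Fin.cons x v) = A.a 0 * (x : ℤ) + erest A v := by
  simp only [PAtom.val, erest]
  rw [Fin.sum_univ_succ]
  simp only [Fin.cons_zero, Fin.cons_succ]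
  ring

def esubst (A : PAtom (n+1)) (u : Fin n → ℤ) (e : ℤ) : PAtom n :=
  ⟨A.ineq, A.m, fun i => A.a i.succ + A.a 0 * u i, A.b + A.a 0 * e⟩

@[simp] lemma esubst_ineq (A : PAtom (n+1)) (u : Fin n → ℤ) (e : ℤ) :
    (esubst A u e).ineq = A.ineq := rfl
@[simp] lemma esubst_m (A : PAtom (n+1)) (u : Fin n → ℤ) (e : ℤ) :
    (esubst A u e).m = A.m := rfl

lemma esubst_val (A : PAtom (n+1)) (u : Fin n → ℤ) (e : ℤ) (v : Fin n → ℕ) :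
    (esubst A u e).val v = A.a 0 * ((∑ i, u i * (v i : ℤ)) + e) + erest A v := by
  simp only [PAtom.val, esubst, erest]
  rw [show (∑ i, (A.a i.succ + A.a 0 * u i) * (v i : ℤ))
      = ∑ i, (A.a i.succ * (v i : ℤ) + A.a 0 * (u i * (v i : ℤ)))
    from Finset.sum_congr rfl fun i _ => by ring, Finset.sum_add_distrib, ← Finset.mul_sum]
  ring

lemma esubst_holds_iff (A : PAtom (n+1)) (u : Fin n → ℤ) (e : ℤ) (v : Fin n → ℕ) (x : ℕ)
    (hx : (∑ i, u i * (v i : ℤ)) + e = (x : ℤ)) :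
    ((esubst A u e).Holds v ↔ A.Holds (Fin.cons x v)) := by
  unfold PAtom.Holds
  rw [esubst_ineq, esubst_m, esubst_val, hx, val_cons]

def emod (L : List (PAtom (n+1))) : ℕ :=
  L.foldr (fun A acc => if A.ineq then acc else Nat.lcm A.m.natAbs acc) 1

lemma emod_pos (L : List (PAtom (n+1))) (hWF : CellWF L) : 0 < emod L := by
  induction L with
  | nil => exact Nat.one_pos
  | cons A L ih =>
    have hL := ih (fun B hB => hWF B (List.mem_cons_of_mem A hB))
    unfold emod
    simp only [List.foldr_cons]
    rcases hi : A.ineq with _ | _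
    · simp only [hi, Bool.false_eq_true, if_false]
      have hm : A.m ≠ 0 := hWF A (List.mem_cons_self) hi
      exact Nat.lcm_pos (Int.natAbs_pos.2 hm) hL
    · simp only [hi, if_true]; exact hL

lemma emod_dvd_cons (A : PAtom (n+1)) (L : List (PAtom (n+1))) :
    emod L ∣ emod (A :: L) := by
  unfold emod
  simp only [List.foldr_cons]
  rcases hi : A.ineq with _ | _
  · simp only [hi, Bool.false_eq_true, if_false]
    exact Nat.dvd_lcm_right _ _
  · simp only [hi, if_true]
    exact dvd_rfl

lemma emod_dvd (L : List (PAtom (n+1))) :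
    ∀ A ∈ L, A.ineq = false → A.m.natAbs ∣ emod L := by
  induction L with
  | nil => intro A hA; exact absurd hA (List.not_mem_nil)
  | cons B L ih =>
    intro A hA hi
    rcases List.mem_cons.1 hA with rfl | hA
    · unfold emod
      simp only [List.foldr_cons, hi, Bool.false_eq_true, if_false]
      exact Nat.dvd_lcm_left _ _
    · exact (ih A hA hi).trans (emod_dvd_cons B L)

def Unit1 (L : List (PAtom (n+1))) : Prop :=
  ∀ A ∈ L, A.a 0 = 0 ∨ A.a 0 = 1 ∨ A.a 0 = -1

lemma elim_unit (L : List (PAtom (n+1))) (hWF : CellWF L) (hU : Unit1 L) :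
    ∃ D : List (List (PAtom n)), DWF D ∧
      ∀ v : Fin n → ℕ, ((∃ x : ℕ, CellHolds L (Fin.cons x v)) ↔ DSat D v) := by
  classical
  set Δ := emod L with hΔ
  have hΔpos := emod_pos L hWF
  set cands : List ((Fin n → ℤ) × ℤ) :=
    (0, 0) :: L.filterMap (fun A => if A.ineq = true ∧ A.a 0 = 1
      then some (fun i => -(A.a i.succ), -A.b) else none) with hcands
  set mkcell : ((Fin n → ℤ) × ℤ) → ℕ → List (PAtom n) := fun ue j =>
    (⟨true, 0, ue.1, ue.2 + (j : ℤ)⟩ : PAtom n)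
      :: L.map (fun A => esubst A ue.1 (ue.2 + (j : ℤ))) with hmk
  set D := cands.flatMap (fun ue => (List.range Δ).map (mkcell ue)) with hD
  have hmem_iff : ∀ Lc, Lc ∈ D ↔ ∃ ue ∈ cands, ∃ j < Δ, Lc = mkcell ue j := by
    intro Lc
    constructor
    · intro h
      rcases List.mem_flatMap.1 h with ⟨ue, hue, h'⟩
      rcases List.mem_map.1 h' with ⟨j, hj, rfl⟩
      exact ⟨ue, hue, j, List.mem_range.1 hj, rfl⟩
    · rintro ⟨ue, hue, j, hj, rfl⟩
      exact List.mem_flatMap.2 ⟨ue, hue, List.mem_map.2 ⟨j, List.mem_range.2 hj, rfl⟩⟩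
  refine ⟨D, ?_, ?_⟩
  · intro Lc hLc
    rcases (hmem_iff Lc).1 hLc with ⟨ue, _, j, _, rfl⟩
    intro A hA
    rcases List.mem_cons.1 hA with rfl | hA
    · exact fun h => nomatch h
    · rcases List.mem_map.1 hA with ⟨B, hB, rfl⟩
      rw [AtomWF, esubst_ineq, esubst_m]
      exact hWF B hB
  · intro v
    have hhead : ∀ (u : Fin n → ℤ) (e : ℤ),
        PAtom.val (⟨true, 0, u, e⟩ : PAtom n) v = (∑ i, u i * (v i : ℤ)) + e := by
      intro u e; simp [PAtom.val]
    constructor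
    · -- forwards: take minimal witness
      intro hex
      set y := Nat.find hex with hy
      have hy' : CellHolds L (Fin.cons y v) := Nat.find_spec hex
      by_cases hcase : y < Δ
      · -- candidate (0,0), j = y
        refine ⟨mkcell (0, 0) y, (hmem_iff _).2 ⟨(0, 0), List.mem_cons_self, y, hcase, rfl⟩, ?_⟩
        have hx : (∑ i, (0 : Fin n → ℤ) i * (v i : ℤ)) + ((0 : ℤ) + (y : ℤ)) = (y : ℤ) := by
          simp
        rw [hmk]
        refine cellHolds_cons.2 ⟨?_, ?_⟩
        · unfold PAtom.Holds
          simp only [if_true]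
          rw [hhead, hx]
          positivity
        · intro B hB
          rcases List.mem_map.1 hB with ⟨A, hA, rfl⟩
          exact (esubst_holds_iff A _ _ v y hx).2 (hy' A hA)
      · -- y ≥ Δ : find a tight lower bound
        push_neg at hcase
        have hylt : y - Δ < y := by omega
        have hnot : ¬ CellHolds L (Fin.cons (y - Δ) v) := Nat.find_min hex hylt
        have hvaldiff : ∀ A : PAtom (n+1),
            A.val (Fin.cons (y - Δ) v) = A.val (Fin.cons y v) - A.a 0 * (Δ : ℤ) := by
          intro A
          rw [val_cons, val_cons, Nat.cast_sub hcase]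
          ring
        -- find the failing atom
        obtain ⟨A, hA, hnA⟩ : ∃ A ∈ L, ¬ A.Holds (Fin.cons (y - Δ) v) := by
          by_contra hco
          push_neg at hco
          exact hnot hco
        have hAy := hy' A hA
        -- the failing atom must be a lower-bound inequality
        have hdvdcase : A.ineq = false → False := by
          intro hi
          refine hnA ?_
          unfold PAtom.Holds at hAy ⊢
          simp only [hi, Bool.false_eq_true, if_false] at hAy ⊢
          rw [hvaldiff]
          have hmdvd : A.m ∣ (Δ : ℤ) := by
            have := emod_dvd L A hA hi
            have h2 : (A.m.natAbs : ℤ) ∣ (Δ : ℤ) := Int.natCast_dvd_natCast.2 this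
            exact (Int.natAbs_dvd.1 h2)
          exact dvd_sub hAy (hmdvd.mul_left _)
        rcases hi : A.ineq with _ | _
        · exact absurd (hdvdcase hi) not_false
        · -- inequality atom
          unfold PAtom.Holds at hAy hnA
          simp only [hi, if_true] at hAy hnA
          have ha0 : A.a 0 = 1 := by
            rcases hU A hA with h0 | h1 | hm1
            · exfalso
              refine hnA ?_
              rw [hvaldiff, h0]
              simpa using hAy
            · exact h1
            · exfalso
              refine hnA ?_
              rw [hvaldiff, hm1]
              have : (0 : ℤ) ≤ (Δ : ℤ) := by positivity
              omega
          rw [hvaldiff, ha0, one_mul] at hnA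
          push_neg at hnA
          -- candidate from A
          set u : Fin n → ℤ := fun i => -(A.a i.succ) with hu
          set e : ℤ := -A.b with he
          have hcand : (u, e) ∈ cands := by
            rw [hcands]
            refine List.mem_cons_of_mem _ (List.mem_filterMap.2 ⟨A, hA, ?_⟩)
            rw [if_pos ⟨hi, ha0⟩]
          have hsum_u : (∑ i, u i * (v i : ℤ)) + e = -(erest A v) := by
            rw [hu, he, erest]
            rw [show (∑ i, -(A.a i.succ) * (v i : ℤ)) = -(∑ i, A.a i.succ * (v i : ℤ))
              from by rw [← Finset.sum_neg_distrib]; exact Finset.sum_congr rfl fun i _ => by ring]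
            ring
          have hvy : A.val (Fin.cons y v) = (y : ℤ) + erest A v := by
            rw [val_cons, ha0]; ring
          rw [hvy] at hAy hnA
          -- so  -(erest A v) ≤ y < -(erest A v) + Δ
          set j : ℕ := ((y : ℤ) + erest A v).toNat with hj
          have hjlt : j < Δ := by omega
          have hx : (∑ i, u i * (v i : ℤ)) + (e + (j : ℤ)) = (y : ℤ) := by
            rw [← add_assoc, hsum_u]
            omega
          refine ⟨mkcell (u, e) j, (hmem_iff _).2 ⟨(u, e), hcand, j, hjlt, rfl⟩, ?_⟩
          rw [hmk]
          refine cellHolds_cons.2 ⟨?_, ?_⟩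
          · unfold PAtom.Holds
            simp only [if_true]
            rw [hhead, hx]
            positivity
          · intro B hB
            rcases List.mem_map.1 hB with ⟨A', hA', rfl⟩
            exact (esubst_holds_iff A' _ _ v y hx).2 (hy' A' hA')
    · -- backwards: a satisfied disjunct gives a witness
      rintro ⟨Lc, hLc, h⟩
      rcases (hmem_iff Lc).1 hLc with ⟨ue, _, j, _, rfl⟩
      rw [hmk] at h
      rcases cellHolds_cons.1 h with ⟨hhd, htl⟩
      unfold PAtom.Holds at hhd
      simp only [if_true] at hhd
      rw [hhead] at hhd
      set w : ℤ := (∑ i, ue.1 i * (v i : ℤ)) + (ue.2 + (j : ℤ)) with hw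
      have hx : (∑ i, ue.1 i * (v i : ℤ)) + (ue.2 + (j : ℤ)) = ((w.toNat : ℕ) : ℤ) := by
        rw [Int.toNat_of_nonneg hhd]
      refine ⟨w.toNat, ?_⟩
      intro A hA
      exact (esubst_holds_iff A _ _ v w.toNat hx).1
        (htl _ (List.mem_map.2 ⟨A, hA, rfl⟩))

/-! ### Normalizing the coefficient of the quantified variable -/

def elam (L : List (PAtom (n+1))) : ℕ :=
  L.foldr (fun A acc => if A.a 0 = 0 then acc else Nat.lcm (A.a 0).natAbs acc) 1

lemma elam_pos (L : List (PAtom (n+1))) : 0 < elam L := by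
  induction L with
  | nil => exact Nat.one_pos
  | cons A L ih =>
    unfold elam
    simp only [List.foldr_cons]
    by_cases h0 : A.a 0 = 0
    · simp only [h0, if_true]; exact ih
    · rw [if_neg h0]
      exact Nat.lcm_pos (Int.natAbs_pos.2 h0) ih

lemma elam_dvd_cons (A : PAtom (n+1)) (L : List (PAtom (n+1))) :
    elam L ∣ elam (A :: L) := by
  unfold elam
  simp only [List.foldr_cons]
  by_cases h0 : A.a 0 = 0
  · rw [if_pos h0]
  · rw [if_neg h0]
    exact Nat.dvd_lcm_right _ _

lemma elam_dvd (L : List (PAtom (n+1))) :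
    ∀ A ∈ L, A.a 0 ≠ 0 → (A.a 0).natAbs ∣ elam L := by
  induction L with
  | nil => intro A hA; exact absurd hA (List.not_mem_nil)
  | cons B L ih =>
    intro A hA h0
    rcases List.mem_cons.1 hA with rfl | hA
    · unfold elam
      simp only [List.foldr_cons, if_neg h0]
      exact Nat.dvd_lcm_left _ _
    · exact (ih A hA h0).trans (elam_dvd_cons B L)

def escale (lam : ℕ) (A : PAtom (n+1)) : PAtom (n+1) :=
  if A.a 0 = 0 then A else
    ⟨A.ineq, ((lam / (A.a 0).natAbs : ℕ) : ℤ) * A.m,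
     Fin.cons (A.a 0).sign (fun i => ((lam / (A.a 0).natAbs : ℕ) : ℤ) * A.a i.succ),
     ((lam / (A.a 0).natAbs : ℕ) : ℤ) * A.b⟩

lemma escale_holds_iff (L : List (PAtom (n+1))) (A : PAtom (n+1)) (hA : A ∈ L)
    (x : ℕ) (v : Fin n → ℕ) :
    ((escale (elam L) A).Holds (Fin.cons (elam L * x) v) ↔ A.Holds (Fin.cons x v)) := by
  by_cases h0 : A.a 0 = 0
  · unfold escale
    rw [if_pos h0]
    unfold PAtom.Holds
    rw [val_cons, val_cons, h0, zero_mul, zero_mul]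
  · set k : ℕ := elam L / (A.a 0).natAbs with hk
    have hdvd := elam_dvd L A hA h0
    have hkpos : 0 < k := Nat.div_pos (Nat.le_of_dvd (elam_pos L) hdvd) (Int.natAbs_pos.2 h0)
    have hklam : k * (A.a 0).natAbs = elam L := Nat.div_mul_cancel hdvd
    unfold escale
    rw [if_neg h0]
    have hval : PAtom.val ⟨A.ineq, (k : ℤ) * A.m,
        Fin.cons (A.a 0).sign (fun i => (k : ℤ) * A.a i.succ), (k : ℤ) * A.b⟩
        (Fin.cons (elam L * x) v) = (k : ℤ) * A.val (Fin.cons x v) := by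
      rw [val_cons, val_cons]
      have h1 : erest ⟨A.ineq, (k : ℤ) * A.m,
          Fin.cons (A.a 0).sign (fun i => (k : ℤ) * A.a i.succ), (k : ℤ) * A.b⟩ v
          = (k : ℤ) * erest A v := by
        unfold erest
        simp only [Fin.cons_succ]
        rw [mul_add, Finset.mul_sum]
        congr 1
        exact Finset.sum_congr rfl fun i _ => by ring
      rw [h1]
      simp only [Fin.cons_zero]
      have h2 : ((elam L * x : ℕ) : ℤ) = (k : ℤ) * (A.a 0).natAbs * (x : ℤ) := by
        push_cast [← hklam]
        ring
      rw [h2]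
      have h3 : (A.a 0).sign * ((k : ℤ) * (A.a 0).natAbs * (x : ℤ))
          = (k : ℤ) * (A.a 0 * (x : ℤ)) := by
        rw [show (A.a 0).sign * ((k : ℤ) * (A.a 0).natAbs * (x : ℤ))
            = (k : ℤ) * (((A.a 0).sign * (A.a 0).natAbs) * (x : ℤ)) from by ring,
          Int.sign_mul_natAbs]
      rw [h3]
      ring
    unfold PAtom.Holds
    rw [hval]
    have hk0 : (0 : ℤ) < (k : ℤ) := by exact_mod_cast hkpos
    rcases hi : A.ineq with _ | _
    · simp only [hi, Bool.false_eq_true, if_false]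
      exact mul_dvd_mul_iff_left (ne_of_gt hk0)
    · simp only [hi, if_true]
      constructor
      · intro h; nlinarith
      · intro h; nlinarith

lemma cell_ex (L : List (PAtom (n+1))) (hWF : CellWF L) :
    ∃ D : List (List (PAtom n)), DWF D ∧
      ∀ v : Fin n → ℕ, ((∃ x : ℕ, CellHolds L (Fin.cons x v)) ↔ DSat D v) := by
  classical
  set lam := elam L with hlam
  have hlampos := elam_pos L
  set lamAtom : PAtom (n+1) := ⟨false, (lam : ℤ), Fin.cons 1 0, 0⟩ with hlamAtom
  have hlamval : ∀ y : ℕ, ∀ v : Fin n → ℕ, lamAtom.val (Fin.cons y v) = (y : ℤ) := by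
    intro y v
    rw [hlamAtom, val_cons]
    unfold erest
    simp [Fin.cons_zero, Fin.cons_succ]
  set L₁ := L.map (escale lam) ++ [lamAtom] with hL₁
  have hkfact : ∀ B : PAtom (n+1), B ∈ L → B.a 0 ≠ 0 → 0 < lam / (B.a 0).natAbs := by
    intro B hB h0
    exact Nat.div_pos (Nat.le_of_dvd hlampos (elam_dvd L B hB h0)) (Int.natAbs_pos.2 h0)
  have hWF₁ : CellWF L₁ := by
    intro A hA
    rcases List.mem_append.1 hA with h | h
    · rcases List.mem_map.1 h with ⟨B, hB, rfl⟩
      unfold escale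
      by_cases h0 : B.a 0 = 0
      · rw [if_pos h0]; exact hWF B hB
      · rw [if_neg h0]
        intro hi
        have hm : B.m ≠ 0 := hWF B hB hi
        refine mul_ne_zero ?_ hm
        have hk := hkfact B hB h0
        exact_mod_cast hk.ne'
    · rcases List.mem_singleton.1 h with rfl
      intro _
      rw [hlamAtom]
      show ((lam : ℕ) : ℤ) ≠ 0
      exact_mod_cast hlampos.ne'
  have hU₁ : Unit1 L₁ := by
    intro A hA
    rcases List.mem_append.1 hA with h | h
    · rcases List.mem_map.1 h with ⟨B, hB, rfl⟩
      unfold escale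
      by_cases h0 : B.a 0 = 0
      · rw [if_pos h0]; exact Or.inl h0
      · rw [if_neg h0]
        have : (Fin.cons (B.a 0).sign
            (fun i => ((lam / (B.a 0).natAbs : ℕ) : ℤ) * B.a i.succ) : Fin (n+1) → ℤ) 0
            = (B.a 0).sign := Fin.cons_zero _ _
        rcases Int.lt_or_lt_of_ne h0 with hlt | hlt
        · exact Or.inr (Or.inr (by simpa [this] using Int.sign_eq_neg_one_of_neg hlt))
        · exact Or.inr (Or.inl (by simpa [this] using Int.sign_eq_one_of_pos hlt))
    · rcases List.mem_singleton.1 h with rfl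
      rw [hlamAtom]
      refine Or.inr (Or.inl ?_)
      show (Fin.cons 1 0 : Fin (n+1) → ℤ) 0 = 1
      exact Fin.cons_zero _ _
  obtain ⟨D, hDWF, hDiff⟩ := elim_unit L₁ hWF₁ hU₁
  refine ⟨D, hDWF, fun v => ?_⟩
  rw [← hDiff v]
  constructor
  · rintro ⟨x, hx⟩
    refine ⟨lam * x, ?_⟩
    intro A hA
    rcases List.mem_append.1 hA with h | h
    · rcases List.mem_map.1 h with ⟨B, hB, rfl⟩
      exact (escale_holds_iff L B hB x v).2 (hx B hB)
    · rcases List.mem_singleton.1 h with rfl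
      unfold PAtom.Holds
      rw [hlamval]
      simp only [hlamAtom, Bool.false_eq_true, if_false]
      push_cast
      exact Dvd.intro _ rfl
  · rintro ⟨y, hy⟩
    have hlamdvd : lam ∣ y := by
      have h := hy lamAtom (List.mem_append.2 (Or.inr (List.mem_singleton_self _)))
      unfold PAtom.Holds at h
      rw [hlamval] at h
      simp only [hlamAtom, Bool.false_eq_true, if_false] at h
      exact_mod_cast h
    obtain ⟨x, rfl⟩ := hlamdvd
    refine ⟨x, fun A hA => ?_⟩
    refine (escale_holds_iff L A hA x v).1 ?_
    exact hy (escale lam A)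
      (List.mem_append.2 (Or.inl (List.mem_map.2 ⟨A, hA, rfl⟩)))

lemma dnf_ex (D : List (List (PAtom (n+1)))) (hWF : DWF D) :
    ∃ D', DWF D' ∧ ∀ v : Fin n → ℕ, ((∃ x : ℕ, DSat D (Fin.cons x v)) ↔ DSat D' v) := by
  induction D with
  | nil =>
    refine ⟨[], fun L hL => absurd hL (List.not_mem_nil), fun v => ?_⟩
    constructor
    · rintro ⟨x, hx⟩; exact absurd hx (dsat_nil _)
    · intro h; exact absurd h (dsat_nil _)
  | cons L D ih =>
    obtain ⟨DL, hDLwf, hDL⟩ := cell_ex L (hWF L (List.mem_cons_self))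
    obtain ⟨DD, hDDwf, hDD⟩ := ih (fun L' hL' => hWF L' (List.mem_cons_of_mem L hL'))
    refine ⟨DL ++ DD, dwf_append hDLwf hDDwf, fun v => ?_⟩
    rw [dsat_append, ← hDL v, ← hDD v]
    constructor
    · rintro ⟨x, hx⟩
      rcases dsat_cons.1 hx with h | h
      exacts [Or.inl ⟨x, h⟩, Or.inr ⟨x, h⟩]
    · rintro (⟨x, h⟩ | ⟨x, h⟩)
      exacts [⟨x, dsat_cons.2 (Or.inl h)⟩, ⟨x, dsat_cons.2 (Or.inr h)⟩]

lemma atom_val_terms (a₁ a₂ : Fin n → ℕ) (c : ℤ) (v : Fin n → ℕ) :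
    PAtom.val ⟨true, 0, fun i => (a₁ i : ℤ) - (a₂ i : ℤ), c⟩ v
      = ((∑ i, a₁ i * v i : ℕ) : ℤ) - ((∑ i, a₂ i * v i : ℕ) : ℤ) + c := by
  simp only [PAtom.val]
  push_cast
  rw [show (∑ i, ((a₁ i : ℤ) - a₂ i) * (v i : ℤ))
      = ∑ i, ((a₁ i : ℤ) * v i - (a₂ i : ℤ) * v i)
    from Finset.sum_congr rfl fun i _ => sub_mul _ _ _, Finset.sum_sub_distrib]

theorem pform_dnf {n : ℕ} (φ : PForm n) :
    ∃ D, DWF D ∧ ∀ v, (φ.Sat v ↔ DSat D v) := by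
  induction φ with
  | eq s t =>
    obtain ⟨a₁, b₁, h₁⟩ := pterm_linear s
    obtain ⟨a₂, b₂, h₂⟩ := pterm_linear t
    refine ⟨[[⟨true, 0, fun i => (a₁ i : ℤ) - a₂ i, (b₁ : ℤ) - b₂⟩,
             ⟨true, 0, fun i => (a₂ i : ℤ) - a₁ i, (b₂ : ℤ) - b₁⟩]], ?_, ?_⟩
    · intro L hL
      rcases List.mem_singleton.1 hL with rfl
      intro A hA
      rcases List.mem_cons.1 hA with rfl | hA
      · exact fun h => nomatch h
      · rcases List.mem_singleton.1 hA with rfl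
        exact fun h => nomatch h
    · intro v
      have e₁ := atom_val_terms a₁ a₂ ((b₁ : ℤ) - b₂) v
      have e₂ := atom_val_terms a₂ a₁ ((b₂ : ℤ) - b₁) v
      have hs := h₁ v
      have ht := h₂ v
      show s.eval v = t.eval v ↔ _
      constructor
      · intro h
        refine ⟨_, List.mem_singleton_self _, ?_⟩
        intro A hA
        rcases List.mem_cons.1 hA with rfl | hA
        · unfold PAtom.Holds
          simp only [if_true]
          rw [e₁]; omega
        · rcases List.mem_singleton.1 hA with rfl
          unfold PAtom.Holds
          simp only [if_true]
          rw [e₂]; omega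
      · rintro ⟨L, hL, h⟩
        rcases List.mem_singleton.1 hL with rfl
        have hA1 := h _ (List.mem_cons_self)
        have hA2 := h _ (List.mem_cons_of_mem _ (List.mem_singleton_self _))
        unfold PAtom.Holds at hA1 hA2
        simp only [if_true] at hA1 hA2
        rw [e₁] at hA1
        rw [e₂] at hA2
        omega
  | lt s t =>
    obtain ⟨a₁, b₁, h₁⟩ := pterm_linear s
    obtain ⟨a₂, b₂, h₂⟩ := pterm_linear t
    refine ⟨[[⟨true, 0, fun i => (a₂ i : ℤ) - a₁ i, (b₂ : ℤ) - b₁ - 1⟩]], ?_, ?_⟩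
    · intro L hL
      rcases List.mem_singleton.1 hL with rfl
      intro A hA
      rcases List.mem_singleton.1 hA with rfl
      exact fun h => nomatch h
    · intro v
      have e₁ := atom_val_terms a₂ a₁ ((b₂ : ℤ) - b₁ - 1) v
      have hs := h₁ v
      have ht := h₂ v
      show s.eval v < t.eval v ↔ _
      constructor
      · intro h
        refine ⟨_, List.mem_singleton_self _, ?_⟩
        intro A hA
        rcases List.mem_singleton.1 hA with rfl
        unfold PAtom.Holds
        simp only [if_true]
        rw [e₁]; omega
      · rintro ⟨L, hL, h⟩
        rcases List.mem_singleton.1 hL with rfl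
        have hA1 := h _ (List.mem_singleton_self _)
        unfold PAtom.Holds at hA1
        simp only [if_true] at hA1
        rw [e₁] at hA1
        omega
  | not φ ih =>
    obtain ⟨D, hWF, hD⟩ := ih
    obtain ⟨D', hWF', hD'⟩ := dnf_neg D hWF
    refine ⟨D', hWF', fun v => ?_⟩
    show ¬ φ.Sat v ↔ _
    rw [← hD' v]
    exact not_congr (hD v)
  | or φ ψ ihφ ihψ =>
    obtain ⟨D₁, hWF₁, hD₁⟩ := ihφ
    obtain ⟨D₂, hWF₂, hD₂⟩ := ihψ
    refine ⟨D₁ ++ D₂, dwf_append hWF₁ hWF₂, fun v => ?_⟩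
    show φ.Sat v ∨ ψ.Sat v ↔ _
    rw [dsat_append, hD₁ v, hD₂ v]
  | ex φ ih =>
    obtain ⟨D, hWF, hD⟩ := ih
    obtain ⟨D', hWF', hD'⟩ := dnf_ex D hWF
    refine ⟨D', hWF', fun v => ?_⟩
    show (∃ x : ℕ, φ.Sat (Fin.cons x v)) ↔ _
    rw [← hD' v]
    exact exists_congr fun x => hD _

theorem presburger_isSemilinear {d : ℕ} (φ : PForm d) :
    IsSemilinear {v | φ.Sat v} := by
  classical
  obtain ⟨D, _, hD⟩ := pform_dnf φ
  have heq : {v | φ.Sat v} = ⋃ L ∈ D.toFinset, {v | CellHolds L v} := by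
    ext v
    simp only [Set.mem_setOf_eq, Set.mem_iUnion, List.mem_toFinset]
    rw [hD v]
    constructor
    · rintro ⟨L, hL, h⟩; exact ⟨L, hL, h⟩
    · rintro ⟨L, hL, h⟩; exact ⟨L, hL, h⟩
  rw [heq]
  exact IsSemilinear.biUnion _ _ fun L _ => cellHolds_semilinear L

/-! ### From semilinear sets to formulas -/

def tnum {n : ℕ} : ℕ → PTerm n
  | 0 => PTerm.zero
  | k+1 => PTerm.add (tnum k) PTerm.one

@[simp] lemma tnum_eval {n : ℕ} (k : ℕ) (v : Fin n → ℕ) : (tnum (n := n) k).eval v = k := by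
  induction k with
  | zero => simp [tnum, PTerm.eval]
  | succ k ih => simp [tnum, PTerm.eval, ih]

def tsmul {n : ℕ} : ℕ → PTerm n → PTerm n
  | 0, _ => PTerm.zero
  | k+1, t => PTerm.add (tsmul k t) t

@[simp] lemma tsmul_eval {n : ℕ} (k : ℕ) (t : PTerm n) (v : Fin n → ℕ) :
    (tsmul k t).eval v = k * t.eval v := by
  induction k with
  | zero => simp [tsmul, PTerm.eval]
  | succ k ih =>
    simp [tsmul, PTerm.eval, ih]
    ring

def ptsum {n : ℕ} : List (PTerm n) → PTerm n
  | [] => PTerm.zero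
  | t :: l => PTerm.add t (ptsum l)

@[simp] lemma ptsum_eval {n : ℕ} (l : List (PTerm n)) (v : Fin n → ℕ) :
    (ptsum l).eval v = (l.map (fun t => t.eval v)).sum := by
  induction l with
  | nil => simp [ptsum, PTerm.eval]
  | cons t l ih =>
    simp [ptsum, PTerm.eval, ih]

def pand {n : ℕ} (φ ψ : PForm n) : PForm n := PForm.not (PForm.or (PForm.not φ) (PForm.not ψ))

lemma pand_sat {n : ℕ} (φ ψ : PForm n) (v : Fin n → ℕ) :
    (pand φ ψ).Sat v ↔ φ.Sat v ∧ ψ.Sat v := by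
  show ¬ (¬ φ.Sat v ∨ ¬ ψ.Sat v) ↔ _
  tauto

def ptrue {n : ℕ} : PForm n := PForm.eq PTerm.zero PTerm.zero
def pfalse {n : ℕ} : PForm n := PForm.lt PTerm.zero PTerm.zero

def pconj {n : ℕ} : List (PForm n) → PForm n
  | [] => ptrue
  | φ :: l => pand φ (pconj l)

lemma pconj_sat {n : ℕ} (l : List (PForm n)) (v : Fin n → ℕ) :
    (pconj l).Sat v ↔ ∀ φ ∈ l, φ.Sat v := by
  induction l with
  | nil =>
    constructor
    · intro _ φ hφ; exact absurd hφ (List.not_mem_nil)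
    · intro _; simp [pconj, ptrue, PForm.Sat]
  | cons φ l ih =>
    rw [show pconj (φ :: l) = pand φ (pconj l) from rfl, pand_sat, ih]
    constructor
    · rintro ⟨h₁, h₂⟩ ψ hψ
      rcases List.mem_cons.1 hψ with rfl | hψ
      exacts [h₁, h₂ ψ hψ]
    · intro h
      exact ⟨h φ (List.mem_cons_self), fun ψ hψ => h ψ (List.mem_cons_of_mem φ hψ)⟩

def pdisj {n : ℕ} : List (PForm n) → PForm n
  | [] => pfalse
  | φ :: l => PForm.or φ (pdisj l)

lemma pdisj_sat {n : ℕ} (l : List (PForm n)) (v : Fin n → ℕ) :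
    (pdisj l).Sat v ↔ ∃ φ ∈ l, φ.Sat v := by
  induction l with
  | nil =>
    simp only [pdisj, pfalse, PForm.Sat]
    constructor
    · intro h; exact absurd h (by simp [PTerm.eval])
    · rintro ⟨φ, hφ, -⟩; exact absurd hφ (List.not_mem_nil)
  | cons φ l ih =>
    rw [show pdisj (φ :: l) = PForm.or φ (pdisj l) from rfl]
    show φ.Sat v ∨ (pdisj l).Sat v ↔ _
    rw [ih]
    constructor
    · rintro (h | ⟨ψ, hψ, h⟩)
      exacts [⟨φ, List.mem_cons_self, h⟩, ⟨ψ, List.mem_cons_of_mem φ hψ, h⟩]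
    · rintro ⟨ψ, hψ, h⟩
      rcases List.mem_cons.1 hψ with rfl | hψ
      exacts [Or.inl h, Or.inr ⟨ψ, hψ, h⟩]

def exs {d : ℕ} : (k : ℕ) → PForm (d + k) → PForm d
  | 0, φ => φ
  | k+1, φ => exs k (PForm.ex φ)

def extv {d : ℕ} : (k : ℕ) → (Fin k → ℕ) → (Fin d → ℕ) → (Fin (d + k) → ℕ)
  | 0, _, v => v
  | k+1, c, v => Fin.cons (c 0) (extv k (fun i => c i.succ) v)

lemma exs_sat {d : ℕ} : ∀ (k : ℕ) (φ : PForm (d + k)) (v : Fin d → ℕ),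
    (exs k φ).Sat v ↔ ∃ c : Fin k → ℕ, φ.Sat (extv k c v) := by
  intro k
  induction k with
  | zero =>
    intro φ v
    constructor
    · intro h; exact ⟨fun i => i.elim0, h⟩
    · rintro ⟨c, h⟩; exact h
  | succ k ih =>
    intro φ v
    show (exs k (PForm.ex φ)).Sat v ↔ _
    rw [ih (PForm.ex φ) v]
    constructor
    · rintro ⟨c, x, h⟩
      refine ⟨Fin.cons x c, ?_⟩
      show φ.Sat (Fin.cons ((Fin.cons x c : Fin (k+1) → ℕ) 0)
        (extv k (fun i => (Fin.cons x c : Fin (k+1) → ℕ) i.succ) v))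
      rw [Fin.cons_zero]
      have : (fun i => (Fin.cons x c : Fin (k+1) → ℕ) i.succ) = c := funext fun i => by simp
      rw [this]
      exact h
    · rintro ⟨c, h⟩
      refine ⟨fun i => c i.succ, c 0, ?_⟩
      exact h

lemma extv_cvar {d : ℕ} : ∀ (k : ℕ) (c : Fin k → ℕ) (v : Fin d → ℕ) (i : Fin k)
    (h : (i : ℕ) < d + k), extv k c v ⟨i, h⟩ = c i := by
  intro k
  induction k with
  | zero => intro c v i; exact i.elim0
  | succ k ih =>
    intro c v i h
    rcases i with ⟨iv, hiv⟩
    cases iv with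
    | zero =>
      show (Fin.cons (c 0) (extv k (fun i => c i.succ) v) : Fin (d + k + 1) → ℕ) ⟨0, h⟩ = _
      have : (⟨0, h⟩ : Fin (d + k + 1)) = 0 := rfl
      rw [this, Fin.cons_zero]
      rfl
    | succ j =>
      have hj : j < d + k := by omega
      show (Fin.cons (c 0) (extv k (fun i => c i.succ) v) : Fin (d + k + 1) → ℕ) ⟨j + 1, h⟩ = _
      have hsucc : (⟨j + 1, h⟩ : Fin (d + k + 1)) = Fin.succ ⟨j, hj⟩ := rfl
      rw [hsucc, Fin.cons_succ]
      have hj' : j < k := by omega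
      rw [ih (fun i => c i.succ) v ⟨j, hj'⟩ hj]
      congr 1

lemma extv_vvar {d : ℕ} : ∀ (k : ℕ) (c : Fin k → ℕ) (v : Fin d → ℕ) (j : Fin d)
    (h : k + (j : ℕ) < d + k), extv k c v ⟨k + (j : ℕ), h⟩ = v j := by
  intro k
  induction k with
  | zero =>
    intro c v j h
    show v ⟨0 + (j : ℕ), h⟩ = v j
    congr 1
    exact Fin.ext (Nat.zero_add _)
  | succ k ih =>
    intro c v j h
    have hj : k + (j : ℕ) < d + k := by omega
    show (Fin.cons (c 0) (extv k (fun i => c i.succ) v) : Fin (d + k + 1) → ℕ)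
      ⟨k + 1 + (j : ℕ), h⟩ = _
    have hsucc : (⟨k + 1 + (j : ℕ), h⟩ : Fin (d + k + 1)) = Fin.succ ⟨k + (j : ℕ), hj⟩ := by
      apply Fin.ext
      show k + 1 + (j : ℕ) = (k + (j : ℕ)) + 1
      omega
    rw [hsucc, Fin.cons_succ]
    exact ih (fun i => c i.succ) v j hj

@[simp] lemma PTerm.eval_var {n : ℕ} (i : Fin n) (v : Fin n → ℕ) :
    (PTerm.var i).eval v = v i := by simp [PTerm.eval]
@[simp] lemma PTerm.eval_add' {n : ℕ} (s t : PTerm n) (v : Fin n → ℕ) :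
    (PTerm.add s t).eval v = s.eval v + t.eval v := by simp [PTerm.eval]

/-- Every linear set is Presburger definable. -/
lemma isLinear_pform {d : ℕ} (k : ℕ) (v₀ : Fin d → ℕ) (w : Fin k → Fin d → ℕ) :
    ∃ φ : PForm d, ∀ x : Fin d → ℕ,
      (φ.Sat x ↔ ∃ c : Fin k → ℕ, x = v₀ + ∑ i, c i • w i) := by
  classical
  set eqF : Fin d → PForm (d + k) := fun j =>
    PForm.eq (PTerm.var ⟨k + (j : ℕ), by have := j.isLt; omega⟩)
      (PTerm.add (tnum (v₀ j))
        (ptsum (List.ofFn fun i : Fin k => tsmul (w i j)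
          (PTerm.var ⟨(i : ℕ), by have := i.isLt; omega⟩))))
    with heqF
  refine ⟨exs k (pconj (List.ofFn eqF)), fun x => ?_⟩
  rw [exs_sat]
  have hterm : ∀ (c : Fin k → ℕ) (j : Fin d),
      (ptsum (List.ofFn fun i : Fin k => tsmul (w i j)
        (PTerm.var ⟨(i : ℕ), by have := i.isLt; omega⟩))).eval (extv k c x)
      = ∑ i, c i * w i j := by
    intro c j
    rw [ptsum_eval, List.map_ofFn, List.sum_ofFn]
    refine Finset.sum_congr rfl fun i _ => ?_
    simp only [Function.comp_apply, tsmul_eval, PTerm.eval_var]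
    rw [extv_cvar]
    ring
  have hform : ∀ (c : Fin k → ℕ) (j : Fin d),
      ((eqF j).Sat (extv k c x) ↔ x j = v₀ j + ∑ i, c i * w i j) := by
    intro c j
    have hdef : (eqF j).Sat (extv k c x) ↔
        extv k c x ⟨k + (j : ℕ), by have := j.isLt; omega⟩
        = (tnum (v₀ j)).eval (extv k c x) + (ptsum (List.ofFn fun i : Fin k =>
            tsmul (w i j) (PTerm.var ⟨(i : ℕ), by have := i.isLt; omega⟩))).eval (extv k c x) := by
      rw [heqF]
      show (PForm.eq _ _).Sat _ ↔ _
      rw [show ∀ (a b : PTerm (d + k)) (y : Fin (d+k) → ℕ),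
          ((PForm.eq a b).Sat y ↔ a.eval y = b.eval y) from fun a b y => Iff.rfl]
      rw [PTerm.eval_add', PTerm.eval_var]
    rw [hdef, extv_vvar, tnum_eval, hterm c j]
  have key : ∀ c : Fin k → ℕ,
      ((pconj (List.ofFn eqF)).Sat (extv k c x) ↔ ∀ j : Fin d, x j = v₀ j + ∑ i, c i * w i j) := by
    intro c
    rw [pconj_sat]
    constructor
    · intro h j
      exact (hform c j).1 (h _ (List.mem_ofFn.2 ⟨j, rfl⟩))
    · intro h φ hφ
      rcases List.mem_ofFn.1 hφ with ⟨j, rfl⟩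
      exact (hform c j).2 (h j)
  have hcoord : ∀ (c : Fin k → ℕ) (j : Fin d),
      (v₀ + ∑ i, c i • w i) j = v₀ j + ∑ i, c i * w i j := by
    intro c j
    simp only [Pi.add_apply, Finset.sum_apply, Pi.smul_apply, smul_eq_mul]
  constructor
  · rintro ⟨c, hc⟩
    refine ⟨c, funext fun j => ?_⟩
    rw [hcoord c j]
    exact ((key c).1 hc) j
  · rintro ⟨c, rfl⟩
    refine ⟨c, (key c).2 fun j => ?_⟩
    exact hcoord c j

/-- A subset of `ℕ^d` is semilinear iff it is definable by a Presburger formula. -/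
theorem semilinear_iff_presburger {d : ℕ} (C : Set (Fin d → ℕ)) :
    IsSemilinear C ↔ ∃ φ : PForm d, C = {v | PForm.Sat φ v} := by
  constructor
  · rintro ⟨m, Cs, hlin, rfl⟩
    have hex : ∀ i : Fin m, ∃ φ : PForm d, ∀ x, (φ.Sat x ↔ x ∈ Cs i) := by
      intro i
      obtain ⟨k, v₀, w, hC⟩ := hlin i
      obtain ⟨φ, hφ⟩ := isLinear_pform k v₀ w
      exact ⟨φ, fun x => by rw [hC]; exact hφ x⟩
    choose φs hφs using hex
    refine ⟨pdisj (List.ofFn φs), ?_⟩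
    ext v
    simp only [Set.mem_iUnion, Set.mem_setOf_eq]
    rw [pdisj_sat]
    constructor
    · rintro ⟨i, hi⟩
      exact ⟨φs i, List.mem_ofFn.2 ⟨i, rfl⟩, (hφs i v).2 hi⟩
    · rintro ⟨ψ, hψ, h⟩
      rcases List.mem_ofFn.1 hψ with ⟨i, rfl⟩
      exact ⟨i, (hφs i v).1 h⟩
  · rintro ⟨φ, rfl⟩
    exact presburger_isSemilinear φ
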